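/- Let K be a complete non-Archimedean field and let f(z) = Σ_{n≥0} c_n z^n be a power series converging on the closed ball B_r(0) (i.e. |c_n| r^n → 0) with f(B_r(0)) ⊆ B_s(b) for some b ∈ K, s > 0, and such that sup_n |c_n| r^n over n ≥ 1 equals s (so that the image is exactly a ball of radius s). Then for all x, y ∈ B_r(0): |f(x) - f(y)| ≤ (s/r)·|x - y|. -/
import Mathlib


/-- Proposition 3.20 of Benedetto: a power series mapping `B_r(0)` into a ball
of radius `s`, with `sup_{n ≥ 1} |c_n| r^n = s`, satisfies the Lipschitz bound
`|f(x) - f(y)| ≤ (s/r)|x - y|` on `B_r(0)`. -/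
theorem stmt9 {K : Type*} [NontriviallyNormedField K] [CompleteSpace K]
    [IsUltrametricDist K] (r s : ℝ) (hr : 0 < r) (hs : 0 < s) (b : K)
    (c : ℕ → K)
    (hconv : Filter.Tendsto (fun n => ‖c n‖ * r ^ n) Filter.atTop (nhds 0))
    (hmap : ∀ x : K, ‖x‖ ≤ r → ‖(∑' n, c n * x ^ n) - b‖ ≤ s)
    (hsup : IsLUB {u : ℝ | ∃ n : ℕ, 1 ≤ n ∧ u = ‖c n‖ * r ^ n} s) :
    ∀ x y : K, ‖x‖ ≤ r → ‖y‖ ≤ r →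
      ‖(∑' n, c n * x ^ n) - ∑' n, c n * y ^ n‖ ≤ (s / r) * ‖x - y‖ := by
  intro x y hx hy
  have hcb : ∀ n : ℕ, 1 ≤ n → ‖c n‖ * r ^ n ≤ s := fun n hn =>
    hsup.1 ⟨n, hn, rfl⟩
  -- summability
  have hsum : ∀ z : K, ‖z‖ ≤ r → Summable (fun n => c n * z ^ n) := by
    intro z hz
    apply NonarchimedeanAddGroup.summable_of_tendsto_cofinite_zero
    rw [Nat.cofinite_eq_atTop]
    rw [tendsto_zero_iff_norm_tendsto_zero]
    apply squeeze_zero (fun n => norm_nonneg _) _ hconv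
    intro n
    calc ‖c n * z ^ n‖ = ‖c n‖ * ‖z‖ ^ n := by rw [norm_mul, norm_pow]
      _ ≤ ‖c n‖ * r ^ n := by gcongr
  have sx := hsum x hx
  have sy := hsum y hy
  rw [← Summable.tsum_sub sx sy]
  have hC : (0:ℝ) ≤ (s / r) * ‖x - y‖ :=
    mul_nonneg (div_nonneg hs.le hr.le) (norm_nonneg _)
  apply IsUltrametricDist.norm_tsum_le_of_forall_le_of_nonneg hC
  intro n
  match n with
  | 0 => simpa using hC
  | Nat.succ m =>
    set n := m + 1
    have hn : 1 ≤ n := Nat.le_add_left 1 m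
    have hfact : c n * x ^ n - c n * y ^ n
        = c n * ((∑ i ∈ Finset.range n, x ^ i * y ^ (n - 1 - i)) * (x - y)) := by
      rw [geom_sum₂_mul, mul_sub]
    rw [hfact, norm_mul, norm_mul]
    have hgeom : ‖∑ i ∈ Finset.range n, x ^ i * y ^ (n - 1 - i)‖ ≤ r ^ (n - 1) := by
      apply IsUltrametricDist.norm_sum_le_of_forall_le_of_nonneg
        (pow_nonneg hr.le _)
      intro i hi
      rw [Finset.mem_range] at hi
      calc ‖x ^ i * y ^ (n - 1 - i)‖ = ‖x‖ ^ i * ‖y‖ ^ (n - 1 - i) := by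
            rw [norm_mul, norm_pow, norm_pow]
        _ ≤ r ^ i * r ^ (n - 1 - i) := by
            gcongr <;> first | exact norm_nonneg x | exact norm_nonneg y
        _ = r ^ (n - 1) := by
            rw [← pow_add]
            congr 1
            omega
    calc ‖c n‖ * (‖∑ i ∈ Finset.range n, x ^ i * y ^ (n - 1 - i)‖ * ‖x - y‖)
        ≤ ‖c n‖ * (r ^ (n - 1) * ‖x - y‖) := by
          gcongr
      _ = (‖c n‖ * r ^ (n - 1)) * ‖x - y‖ := by ring
      _ ≤ (s / r) * ‖x - y‖ := by
          gcongr
          rw [le_div_iff₀ hr]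
          have hnn : n - 1 + 1 = n := by omega
          calc ‖c n‖ * r ^ (n - 1) * r = ‖c n‖ * r ^ n := by
                rw [mul_assoc, ← pow_succ, hnn]
            _ ≤ s := hcb n hn
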